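/- Let r ∈ (1,∞), δ > 0, K ≥ 0, μ ∈ (0, min{δ,1}] and ε ∈ (0, μ). Let A ∈ ℂ^{d×d}, b, c ∈ ℂ^d and V ≥ 0 a real number. Suppose Re⟨Aξ, 𝒥_r ξ⟩ ≥ δ|ξ|² for all ξ ∈ ℂ^d, |b + 𝒥_r c| ≤ K, and Γ_r^{(A,b,c,V)}(ξ) ≥ μ(|ξ|² + V) for all ξ ∈ ℂ^d. Then for every real m ≥ K²/(4(δ−μ+ε)(1−μ+ε)) one has Γ_r^{(A,b,c,min{V,m})}(ξ) ≥ (μ−ε)(|ξ|² + min{V,m}) for all ξ ∈ ℂ^d. -/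

import Mathlib

open scoped ComplexConjugate

/-- The ℝ-linear operator `𝒥_p ξ = (p/2)(ξ + (1 − 2/p)·conj ξ)` on `ℂ^d`. -/
noncomputable def Jmap (p : ℝ) {d : ℕ} (ξ : EuclideanSpace ℂ (Fin d)) :
    EuclideanSpace ℂ (Fin d) :=
  WithLp.toLp 2 (fun i => (p / 2 : ℂ) * (ξ i + ((1 - 2 / p : ℝ) : ℂ) * conj (ξ i)))

/-- The Hermitian inner product `⟨x,y⟩ = ∑ x i * conj (y i)`, linear in the first variable. -/
noncomputable def hip {d : ℕ} (x y : EuclideanSpace ℂ (Fin d)) : ℂ :=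
  @inner ℂ _ _ y x

/-- A matrix acting on `ℂ^d`. -/
noncomputable def mulVecE {d : ℕ} (A : Matrix (Fin d) (Fin d) ℂ)
    (ξ : EuclideanSpace ℂ (Fin d)) : EuclideanSpace ℂ (Fin d) :=
  WithLp.toLp 2 (fun i => A.mulVec (fun j => ξ j) i)

/-- `Γ_p^{(A,b,c,V)}(ξ) = Re⟨Aξ, 𝒥_p ξ⟩ + Re⟨b + 𝒥_p c, ξ⟩ + V`. -/
noncomputable def Gamma (p : ℝ) {d : ℕ} (A : Matrix (Fin d) (Fin d) ℂ)
    (b c : EuclideanSpace ℂ (Fin d)) (V : ℝ) (ξ : EuclideanSpace ℂ (Fin d)) : ℝ :=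
  (hip (mulVecE A ξ) (Jmap p ξ)).re + (hip (b + Jmap p c) ξ).re + V

theorem stmt19 (d : ℕ) (hd : 1 ≤ d) (r δ K μ ε : ℝ) (hr : 1 < r) (hδ : 0 < δ)
    (hK : 0 ≤ K) (hμ0 : 0 < μ) (hμ : μ ≤ min δ 1) (hε0 : 0 < ε) (hε : ε < μ)
    (A : Matrix (Fin d) (Fin d) ℂ) (b c : EuclideanSpace ℂ (Fin d))
    (V : ℝ) (hV : 0 ≤ V)
    (hA : ∀ ξ : EuclideanSpace ℂ (Fin d), δ * ‖ξ‖ ^ 2 ≤ (hip (mulVecE A ξ) (Jmap r ξ)).re)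
    (hbc : ‖b + Jmap r c‖ ≤ K)
    (hΓ : ∀ ξ : EuclideanSpace ℂ (Fin d), μ * (‖ξ‖ ^ 2 + V) ≤ Gamma r A b c V ξ) :
    ∀ m : ℝ, K ^ 2 / (4 * (δ - μ + ε) * (1 - μ + ε)) ≤ m →
      ∀ ξ : EuclideanSpace ℂ (Fin d),
        (μ - ε) * (‖ξ‖ ^ 2 + min V m) ≤ Gamma r A b c (min V m) ξ := by
  intro m hm ξ
  have hμδ : μ ≤ δ := le_trans hμ (min_le_left _ _)
  have hμ1 : μ ≤ 1 := le_trans hμ (min_le_right _ _)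
  have ha : 0 < δ - μ + ε := by linarith
  have hc : 0 < 1 - μ + ε := by linarith
  rcases le_total V m with h | h
  · rw [min_eq_left h]
    have hΓξ := hΓ ξ
    nlinarith [sq_nonneg ‖ξ‖]
  · rw [min_eq_right h]
    have hm0 : 0 ≤ m := le_trans (by positivity) hm
    have hK2 : K ^ 2 ≤ 4 * (δ - μ + ε) * (1 - μ + ε) * m := by
      rw [div_le_iff₀ (by positivity)] at hm; linarith
    have hre : -(K * ‖ξ‖) ≤ (hip (b + Jmap r c) ξ).re := by
      have h1 : ‖hip (b + Jmap r c) ξ‖ ≤ ‖ξ‖ * ‖b + Jmap r c‖ :=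
        norm_inner_le_norm (𝕜 := ℂ) ξ (b + Jmap r c)
      have h2 : |(hip (b + Jmap r c) ξ).re| ≤ ‖hip (b + Jmap r c) ξ‖ :=
        Complex.abs_re_le_norm _
      have h3 : ‖ξ‖ * ‖b + Jmap r c‖ ≤ ‖ξ‖ * K :=
        mul_le_mul_of_nonneg_left hbc (norm_nonneg _)
      nlinarith [neg_abs_le (hip (b + Jmap r c) ξ).re]
    have hAξ := hA ξ
    have key : 0 ≤ (δ - μ + ε) * ‖ξ‖ ^ 2 - K * ‖ξ‖ + (1 - μ + ε) * m := by
      nlinarith [sq_nonneg (2 * (δ - μ + ε) * ‖ξ‖ - K)]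
    unfold Gamma
    nlinarith
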